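/- In the monoid SKω, the circle element c = δ_k γ_k (which is independent of k) is central: for every element t of SKω, t·c = c·t. -/

import Mathlib

/-- Generators of the monoid `SKω`: cups `δ_k`, caps `γ_k` and crossings `σ_k`,
indexed by positive natural numbers. -/
inductive SKGen : Type
  | cup : ℕ+ → SKGen
  | cap : ℕ+ → SKGen
  | cross : ℕ+ → SKGen

open FreeMonoid in
/-- The defining relations of the monoid `SKω`. -/
inductive SKRel : FreeMonoid SKGen → FreeMonoid SKGen → Prop
  | cup (j k : ℕ+) (h : j ≤ k) :
      SKRel (of (.cup k) * of (.cup j)) (of (.cup j) * of (.cup (k + 2)))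
  | cap (j k : ℕ+) (h : j ≤ k) :
      SKRel (of (.cap j) * of (.cap k)) (of (.cap (k + 2)) * of (.cap j))
  | cup_cap_one (j k : ℕ+) (h : j ≤ k) :
      SKRel (of (.cup (k + 2)) * of (.cap j)) (of (.cap j) * of (.cup k))
  | cap_cup_one (j k : ℕ+) (h : j ≤ k) :
      SKRel (of (.cup j) * of (.cap (k + 2))) (of (.cap k) * of (.cup j))
  | cup_cap (i : ℕ+) :
      SKRel (of (.cup i) * of (.cap (i + 1))) 1
  | sigma (j k : ℕ+) (h : j ≤ k) :
      SKRel (of (.cross (k + 2)) * of (.cross j)) (of (.cross j) * of (.cross (k + 2)))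
  | sigma_two (i : ℕ+) :
      SKRel (of (.cross i) * of (.cross i)) 1
  | sigma_three (i : ℕ+) :
      SKRel (of (.cross (i + 1)) * of (.cross i) * of (.cross (i + 1)))
            (of (.cross i) * of (.cross (i + 1)) * of (.cross i))
  | sigma_cup_one (j k : ℕ+) (h : j ≤ k) :
      SKRel (of (.cup (k + 2)) * of (.cross j)) (of (.cross j) * of (.cup (k + 2)))
  | sigma_cup_two (j k : ℕ+) (h : j ≤ k) :
      SKRel (of (.cup j) * of (.cross (k + 2))) (of (.cross k) * of (.cup j))
  | sigma_cup_three (i : ℕ+) :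
      SKRel (of (.cup i) * of (.cross i)) (of (.cup i))
  | sigma_cup_four (i : ℕ+) :
      SKRel (of (.cup (i + 1)) * of (.cross i)) (of (.cup i) * of (.cross (i + 1)))
  | sigma_cap_one (j k : ℕ+) (h : j ≤ k) :
      SKRel (of (.cross j) * of (.cap (k + 2))) (of (.cap (k + 2)) * of (.cross j))
  | sigma_cap_two (j k : ℕ+) (h : j ≤ k) :
      SKRel (of (.cross (k + 2)) * of (.cap j)) (of (.cap j) * of (.cross k))
  | sigma_cap_three (i : ℕ+) :
      SKRel (of (.cross i) * of (.cap i)) (of (.cap i))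
  | sigma_cap_four (i : ℕ+) :
      SKRel (of (.cross i) * of (.cap (i + 1))) (of (.cross (i + 1)) * of (.cap i))

/-- The monoid `SKω`, presented by cups, caps and crossings with the monoid, cup-cap,
σ, σ-cup and σ-cap equations. -/
def SKomega : Type := PresentedMonoid SKRel

instance : Monoid SKomega := by unfold SKomega; infer_instance

/-- The cup generator `δ_k` of `SKω`. -/
def SKomega.cup (k : ℕ+) : SKomega := PresentedMonoid.of SKRel (SKGen.cup k)

/-- The cap generator `γ_k` of `SKω`. -/
def SKomega.cap (k : ℕ+) : SKomega := PresentedMonoid.of SKRel (SKGen.cap k)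

/-- The crossing generator `σ_k` of `SKω`. -/
def SKomega.cross (k : ℕ+) : SKomega := PresentedMonoid.of SKRel (SKGen.cross k)


/-- The circle element `c = δ_1 γ_1` of `SKω`. -/
def SKomega.circle : SKomega := SKomega.cup 1 * SKomega.cap 1


namespace SKomega

private lemma sk_sound {a b : FreeMonoid SKGen} (h : SKRel a b) :
    PresentedMonoid.mk SKRel a = PresentedMonoid.mk SKRel b :=
  Quotient.sound (ConGen.Rel.of _ _ h)

private lemma rel22 {g1 g2 g3 g4 : SKGen}
    (h : SKRel (.of g1 * .of g2) (.of g3 * .of g4)) :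
    PresentedMonoid.of SKRel g1 * PresentedMonoid.of SKRel g2 =
      PresentedMonoid.of SKRel g3 * PresentedMonoid.of SKRel g4 := by
  simpa [PresentedMonoid.of, map_mul] using sk_sound h

private lemma rel21 {g1 g2 : SKGen} (h : SKRel (.of g1 * .of g2) 1) :
    PresentedMonoid.of SKRel g1 * PresentedMonoid.of SKRel g2 = 1 := by
  simpa [PresentedMonoid.of, map_mul] using sk_sound h

private lemma sigma_two (i : ℕ+) : cross i * cross i = 1 :=
  rel21 (SKRel.sigma_two i)

private lemma sigma_cup_four (i : ℕ+) :
    cup (i + 1) * cross i = cup i * cross (i + 1) :=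
  rel22 (SKRel.sigma_cup_four i)

private lemma sigma_cap_four (i : ℕ+) :
    cross i * cap (i + 1) = cross (i + 1) * cap i :=
  rel22 (SKRel.sigma_cap_four i)

/-- All circles `δ_k γ_k` are equal to `c = δ_1 γ_1`. -/
private lemma circ (k : ℕ+) : cup k * cap k = circle := by
  induction k using PNat.strongInductionOn with
  | _ k ih => ?_
  by_cases hk : k = 1
  · subst hk; rfl
  obtain ⟨m, rfl⟩ := PNat.exists_eq_succ_of_ne_one hk
  calc cup (m + 1) * cap (m + 1)
        = cup (m + 1) * (cross m * cross m) * cap (m + 1) := by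
          rw [sigma_two, mul_one]
      _ = (cup (m + 1) * cross m) * (cross m * cap (m + 1)) := by
          simp [mul_assoc]
      _ = (cup m * cross (m + 1)) * (cross (m + 1) * cap m) := by
          rw [sigma_cup_four, sigma_cap_four]
      _ = cup m * (cross (m + 1) * cross (m + 1)) * cap m := by
          simp [mul_assoc]
      _ = cup m * cap m := by rw [sigma_two, mul_one]
      _ = circle := ih m (PNat.lt_add_right m 1)

private lemma cup_comm (j : ℕ+) : cup j * circle = circle * cup j := by
  have h1 : cap j * cup j = cup j * cap (j + 2) :=
    (rel22 (SKRel.cap_cup_one j j le_rfl)).symm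
  have h2 : cup j * cup j = cup j * cup (j + 2) :=
    rel22 (SKRel.cup j j le_rfl)
  calc cup j * circle = cup j * (cup (j + 2) * cap (j + 2)) := by rw [circ]
    _ = (cup j * cup (j + 2)) * cap (j + 2) := by rw [mul_assoc]
    _ = (cup j * cup j) * cap (j + 2) := by rw [h2]
    _ = cup j * (cap j * cup j) := by rw [mul_assoc, h1]
    _ = (cup j * cap j) * cup j := by rw [mul_assoc]
    _ = circle * cup j := by rw [circ]

private lemma cap_comm (j : ℕ+) : cap j * circle = circle * cap j := by
  have h1 : cap j * cup j = cup j * cap (j + 2) :=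
    (rel22 (SKRel.cap_cup_one j j le_rfl)).symm
  have h2 : cap (j + 2) * cap j = cap j * cap j :=
    (rel22 (SKRel.cap j j le_rfl)).symm
  calc cap j * circle = cap j * (cup j * cap j) := by rw [circ]
    _ = (cap j * cup j) * cap j := by rw [mul_assoc]
    _ = cup j * (cap (j + 2) * cap j) := by rw [h1, mul_assoc]
    _ = cup j * (cap j * cap j) := by rw [h2]
    _ = (cup j * cap j) * cap j := by rw [mul_assoc]
    _ = circle * cap j := by rw [circ]

private lemma cross_comm (j : ℕ+) : cross j * circle = circle * cross j := by
  have h1 : cup (j + 2) * cross j = cross j * cup (j + 2) :=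
    rel22 (SKRel.sigma_cup_one j j le_rfl)
  have h2 : cross j * cap (j + 2) = cap (j + 2) * cross j :=
    rel22 (SKRel.sigma_cap_one j j le_rfl)
  calc cross j * circle = cross j * (cup (j + 2) * cap (j + 2)) := by rw [circ]
    _ = (cross j * cup (j + 2)) * cap (j + 2) := by rw [mul_assoc]
    _ = cup (j + 2) * (cross j * cap (j + 2)) := by rw [← h1, mul_assoc]
    _ = (cup (j + 2) * cap (j + 2)) * cross j := by rw [h2, mul_assoc]
    _ = circle * cross j := by rw [circ]

end SKomega

/-- The circle element of `SKω` is central: `t·c = c·t` for every `t ∈ SKω`. -/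
theorem skomega_circle_central (t : SKomega) :
    t * SKomega.circle = SKomega.circle * t := by
  induction t using PresentedMonoid.inductionOn with
  | _ a =>
    induction a using FreeMonoid.inductionOn' with
    | one => rw [map_one]; exact (one_mul _).trans (mul_one _).symm
    | of_mul g w ih =>
      rw [show PresentedMonoid.mk SKRel (FreeMonoid.of g * w) = @HMul.hMul SKomega SKomega SKomega instHMul (PresentedMonoid.mk SKRel (FreeMonoid.of g)) (PresentedMonoid.mk SKRel w) from map_mul _ _ _]
      refine (mul_assoc _ _ _).trans ((congrArg _ ih).trans ((mul_assoc _ _ _).symm.trans ((congrArg (fun x : SKomega => x * _) ?_).trans (mul_assoc _ _ _))))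
      cases g with
      | cup k => exact SKomega.cup_comm k
      | cap k => exact SKomega.cap_comm k
      | cross k => exact SKomega.cross_comm k
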